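/- arXiv:2603.06528 — 3 statements merged into one kernel-verified Lean document; each statement's English description precedes it below -/
import Mathlib

section
/- For any flower $(D_0; D_1, \dots, D_d)$ with $d$ petals (i.e., $D_1, \dots, D_d$ are closed disks with pairwise disjoint interiors, all tangent to $D_0$, consecutively tangent in cyclic order, and their union separates $D_0$ from infinity), with radii $r_0, r_1, \dots, r_d$, one has $r_2 \geq 0.01\, d^{-2} \min\{r_0, r_1\}$. -/
/-!
Move the flower so that `D₀` and `D₁` touch at the origin, with centres `r₀` and `-r₁`. As the
petals separate `D₀` from infinity, the ray from the centre of `D₀` pointing away from `D₁` meets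
some petal `D_k`, and `k ≥ 2`. The inversion `z ↦ 1 / z̄` maps `D₀` and `D₁` to the half-planes
`Re ≥ 1 / (2 r₀)` and `Re ≤ -1 / (2 r₁)`, so every further petal becomes a disk of radius at most
`ω = (r₀ + r₁) / (4 r₀ r₁)` in the strip between them, and tangent petals stay tangent. Walking
back along the chain `D_k, …, D₂` from the real axis, the image centre of `D₂` lies within `2 d ω`
of the real axis. But `D₂` touches both `D₀` and `D₁`, which forces the square of that distance
to be at least `ω / r₂`; hence `r₀ r₁ ≤ d² (r₀ + r₁) r₂`.
-/

open Metric Complex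

theorem exists_nonneg_add_smul_mem_of_isBounded_connectedComponentIn {E : Type*}
    [NormedAddCommGroup E] [NormedSpace ℝ E] {S : Set E} {z u : E} (hu : u ≠ 0)
    (hS : Bornology.IsBounded (connectedComponentIn Sᶜ z)) :
    ∃ t : ℝ, 0 ≤ t ∧ z + t • u ∈ S := by
  by_contra! hray
  have hsub : (fun t : ℝ => z + t • u) '' Set.Ici 0 ⊆ connectedComponentIn Sᶜ z :=
    (isPreconnected_Ici.image _ (by fun_prop)).subset_connectedComponentIn
      ⟨0, Set.self_mem_Ici, by simp⟩ (by rintro _ ⟨t, ht, rfl⟩; exact hray t ht)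
  obtain ⟨C, hC⟩ := isBounded_iff_forall_norm_le.1 (hS.subset hsub)
  have hu' : 0 < ‖u‖ := norm_pos_iff.2 hu
  set t := (C + ‖z‖ + 1) / ‖u‖
  have ht : 0 ≤ t :=
    div_nonneg (by linarith [hC z ⟨0, Set.self_mem_Ici, by simp⟩, norm_nonneg z]) hu'.le
  have htu : ‖t • u‖ = C + ‖z‖ + 1 := by
    rw [norm_smul, Real.norm_of_nonneg ht, div_mul_cancel₀ _ hu'.ne']
  have := norm_sub_le (z + t • u) z
  rw [add_sub_cancel_left, htu] at this
  linarith [hC _ ⟨t, ht, rfl⟩]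

theorem exists_norm_eq_one_mul_sub_eq {c₀ c₁ : ℂ} {r₀ r₁ : ℝ} (hr : 0 < r₀ + r₁)
    (h : dist c₀ c₁ = r₀ + r₁) :
    ∃ μ p : ℂ, ‖μ‖ = 1 ∧ μ * (c₀ - p) = r₀ ∧ μ * (c₁ - p) = -r₁ := by
  have hc : c₀ - c₁ ≠ 0 := by
    rw [sub_ne_zero]
    rintro rfl
    rw [dist_self] at h
    linarith
  have hr' : ((r₀ + r₁ : ℝ) : ℂ) ≠ 0 := ofReal_ne_zero.2 hr.ne'
  refine ⟨(r₀ + r₁ : ℝ) / (c₀ - c₁), c₀ - r₀ * (c₀ - c₁) / (r₀ + r₁ : ℝ), ?_, ?_, ?_⟩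
  · rw [norm_div, ← dist_eq_norm, h, norm_real, Real.norm_of_nonneg hr.le, div_self hr.ne']
  · field_simp
    ring
  · field_simp
    push_cast
    ring

/-- The power of the origin with respect to the circle `∂B(z, r)`. When it is positive, the
inversion `w ↦ 1 / conj w` maps that circle to the circle of centre `z / originPower z r` and
radius `r / originPower z r`. -/
def originPower (z : ℂ) (r : ℝ) : ℝ := normSq z - r ^ 2

theorem sq_add_sq_of_dist_eq {z w : ℂ} {a : ℝ} (h : dist z w = a) :
    (z.re - w.re) ^ 2 + (z.im - w.im) ^ 2 = a ^ 2 := by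
  rw [← h, Complex.dist_eq_re_im, Real.sq_sqrt (by positivity)]

theorem dist_div_originPower {z w : ℂ} {r s : ℝ} (hr : 0 ≤ r) (hs : 0 ≤ s)
    (hz : 0 < originPower z r) (hw : 0 < originPower w s) (h : dist z w = r + s) :
    dist (z / originPower z r) (w / originPower w s) =
      r / originPower z r + s / originPower w s := by
  set A := originPower z r with hA
  set B := originPower w s with hB
  have hnorm : ‖B * z - A * w‖ = r * B + s * A := by
    refine (sq_eq_sq₀ (norm_nonneg _) (by positivity)).1 ?_
    have := sq_add_sq_of_dist_eq h
    simp only [hA, hB, originPower, Complex.sq_norm, normSq_apply, sub_re, sub_im, mul_re, mul_im,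
      ofReal_re, ofReal_im]
    linear_combination
      (z.re * z.re + z.im * z.im - r ^ 2) * (w.re * w.re + w.im * w.im - s ^ 2) * this
  rw [dist_eq_norm, div_sub_div _ _ (ofReal_ne_zero.2 hz.ne') (ofReal_ne_zero.2 hw.ne'), norm_div,
    ← ofReal_mul, norm_real, Real.norm_of_nonneg (by positivity), mul_comm z, hnorm]
  field_simp

theorem four_mul_le_mul_originPower {z : ℂ} {r₀ r₁ ρ : ℝ} (hr₀ : 0 ≤ r₀) (hr₁ : 0 ≤ r₁)
    (hρ : 0 ≤ ρ) (h₀ : dist z r₀ = r₀ + ρ) (h₁ : r₁ + ρ ≤ dist z (-r₁)) :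
    4 * r₀ * r₁ * ρ ≤ (r₀ + r₁) * originPower z ρ := by
  have e₀ := sq_add_sq_of_dist_eq h₀
  have e₁ := sq_add_sq_of_dist_eq (rfl : dist z (-r₁) = _)
  have h₁' : 2 * r₁ * (ρ - z.re) ≤ originPower z ρ := by
    have := pow_le_pow_left₀ (by positivity) h₁ 2
    rw [← e₁] at this
    simp only [ofReal_re, ofReal_im, neg_re, neg_im] at this
    simp only [originPower, normSq_apply]
    nlinarith
  have h₀' : originPower z ρ = 2 * r₀ * (z.re + ρ) := by
    simp only [ofReal_re, ofReal_im] at e₀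
    simp only [originPower, normSq_apply]
    linear_combination e₀
  nlinarith [mul_le_mul_of_nonneg_left h₁' hr₀]

theorem div_originPower_le {z : ℂ} {r₀ r₁ ρ : ℝ} (hr₀ : 0 < r₀) (hr₁ : 0 < r₁) (hρ : 0 < ρ)
    (h₀ : dist z r₀ = r₀ + ρ) (h₁ : r₁ + ρ ≤ dist z (-r₁)) :
    0 < originPower z ρ ∧ ρ / originPower z ρ ≤ (r₀ + r₁) / (4 * r₀ * r₁) := by
  have key := four_mul_le_mul_originPower hr₀.le hr₁.le hρ.le h₀ h₁
  have hA : 0 < originPower z ρ :=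
    pos_of_mul_pos_right (lt_of_lt_of_le (by positivity) key) (by positivity)
  refine ⟨hA, ?_⟩
  rw [div_le_div_iff₀ hA (by positivity)]
  linarith

theorem mul_originPower_eq_four_mul {z : ℂ} {r₀ r₁ ρ : ℝ} (h₀ : dist z r₀ = r₀ + ρ)
    (h₁ : dist z (-r₁) = r₁ + ρ) :
    (r₀ + r₁) * originPower z ρ = 4 * r₀ * r₁ * ρ := by
  have e₀ := sq_add_sq_of_dist_eq h₀
  have e₁ := sq_add_sq_of_dist_eq h₁
  simp only [ofReal_re, ofReal_im, neg_re, neg_im] at e₀ e₁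
  simp only [originPower, normSq_apply]
  linear_combination r₁ * e₀ + r₀ * e₁

theorem originPower_le_sq_im {z : ℂ} {r₀ r₁ ρ : ℝ} (hr₀ : 0 < r₀) (hr₁ : 0 < r₁)
    (h₀ : dist z r₀ = r₀ + ρ) (h₁ : dist z (-r₁) = r₁ + ρ) :
    originPower z ρ ≤ z.im ^ 2 := by
  have e₀ := sq_add_sq_of_dist_eq h₀
  have e₁ := sq_add_sq_of_dist_eq h₁
  simp only [ofReal_re, ofReal_im, neg_re, neg_im] at e₀ e₁
  have hx : (r₀ + r₁) * z.re = ρ * (r₁ - r₀) := by linear_combination (e₁ - e₀) / 2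
  have : z.re ^ 2 ≤ ρ ^ 2 := by
    refine le_of_mul_le_mul_left ?_ (by positivity : 0 < (r₀ + r₁) ^ 2)
    rw [← mul_pow, hx, mul_pow, mul_comm]
    gcongr ?_ * _
    nlinarith
  simp only [originPower, normSq_apply]
  nlinarith

theorem abs_im_le_abs_im_add_dist (z w : ℂ) : |z.im| ≤ |w.im| + dist z w := by
  have := abs_im_le_norm (z - w)
  rw [sub_im, ← dist_eq_norm] at this
  linarith [abs_sub_abs_le_abs_sub z.im w.im]

theorem dist_div_originPower_le_of_chain {ζ : ℕ → ℂ} {r : ℕ → ℝ} {ω : ℝ} {m n : ℕ} (hmn : m ≤ n)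
    (hr : ∀ j, m ≤ j → j ≤ n → 0 ≤ r j)
    (hA : ∀ j, m ≤ j → j ≤ n → 0 < originPower (ζ j) (r j))
    (hω : ∀ j, m ≤ j → j ≤ n → r j / originPower (ζ j) (r j) ≤ ω)
    (htan : ∀ j, m ≤ j → j < n → dist (ζ j) (ζ (j + 1)) = r j + r (j + 1)) :
    dist (ζ m / originPower (ζ m) (r m)) (ζ n / originPower (ζ n) (r n)) ≤ (n - m) * (2 * ω) := by
  have hstep : ∀ {j}, m ≤ j → j < n → dist (ζ j / originPower (ζ j) (r j))
      (ζ (j + 1) / originPower (ζ (j + 1)) (r (j + 1))) ≤ 2 * ω := fun {j} hj hjn => by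
    rw [dist_div_originPower (hr j hj hjn.le) (hr (j + 1) (by omega) hjn) (hA j hj hjn.le)
      (hA (j + 1) (by omega) hjn) (htan j hj hjn)]
    linarith [hω j hj hjn.le, hω (j + 1) (by omega) hjn]
  have := dist_le_Ico_sum_of_dist_le (f := fun j => ζ j / originPower (ζ j) (r j)) hmn hstep
  simpa [Nat.cast_sub hmn] using this

theorem mul_le_sq_mul_of_normalized_flower {d k : ℕ} {ζ : ℕ → ℂ} {r : ℕ → ℝ}
    (hpos : ∀ j ≤ d, 0 < r j)
    (h₀ : ∀ j, 2 ≤ j → j ≤ d → dist (ζ j) (r 0) = r 0 + r j)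
    (h₁ : ∀ j, 2 ≤ j → j ≤ d → r 1 + r j ≤ dist (ζ j) (-r 1))
    (h₂ : dist (ζ 2) (-r 1) = r 1 + r 2)
    (htan : ∀ j, 2 ≤ j → j < d → dist (ζ j) (ζ (j + 1)) = r j + r (j + 1))
    (hk : 2 ≤ k) (hkd : k ≤ d) (hit : |(ζ k).im| ≤ r k) :
    r 0 * r 1 ≤ d ^ 2 * (r 0 + r 1) * r 2 := by
  have hr₀ := hpos 0 (by omega)
  have hr₁ := hpos 1 (by omega)
  -- half the width of the strip between the images of `∂D₀` and `∂D₁` under inversion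
  set ω := (r 0 + r 1) / (4 * r 0 * r 1)
  have hinv : ∀ j, 2 ≤ j → j ≤ d →
      0 < originPower (ζ j) (r j) ∧ r j / originPower (ζ j) (r j) ≤ ω := fun j hj hjd =>
    div_originPower_le hr₀ hr₁ (hpos j hjd) (h₀ j hj hjd) (h₁ j hj hjd)
  have hchain := dist_div_originPower_le_of_chain hk (fun j _ hj => (hpos j (by omega)).le)
    (fun j hj hjk => (hinv j hj (by omega)).1) (fun j hj hjk => (hinv j hj (by omega)).2)
    (fun j hj hjk => htan j hj (by omega))
  have hhit : |(ζ k / originPower (ζ k) (r k)).im| ≤ ω := by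
    obtain ⟨hA, hρ⟩ := hinv k hk hkd
    rw [div_ofReal_im, abs_div, abs_of_pos hA]
    exact (div_le_div_of_nonneg_right hit hA.le).trans hρ
  set A := originPower (ζ 2) (r 2)
  have hA : 0 < A := (hinv 2 le_rfl (by omega)).1
  have him : |(ζ 2).im| ≤ 2 * d * ω * A := by
    have hkd' : (k : ℝ) ≤ d := by exact_mod_cast hkd
    have : |(ζ 2 / A).im| ≤ 2 * d * ω :=
      calc |(ζ 2 / A).im|
          ≤ |(ζ k / originPower (ζ k) (r k)).im| + dist (ζ 2 / A) (ζ k / originPower (ζ k) (r k)) :=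
            abs_im_le_abs_im_add_dist _ _
        _ ≤ ω + (k - 2) * (2 * ω) := by push_cast at hchain; exact add_le_add hhit hchain
        _ ≤ 2 * d * ω := by nlinarith [show 0 ≤ ω by positivity]
    rwa [div_ofReal_im, abs_div, abs_of_pos hA, div_le_iff₀ hA] at this
  have hωA : ω * A = r 2 := by
    have := mul_originPower_eq_four_mul (h₀ 2 le_rfl (by omega)) h₂
    rw [div_mul_eq_mul_div, div_eq_iff (by positivity)]
    linarith
  have hAy : A ≤ (ζ 2).im ^ 2 := originPower_le_sq_im hr₀ hr₁ (h₀ 2 le_rfl (by omega)) h₂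
  have hA_le : A ≤ (2 * d * ω * A) ^ 2 :=
    hAy.trans (by rw [← sq_abs]; exact pow_le_pow_left₀ (abs_nonneg _) him 2)
  have hω4 : 4 * ω * (r 0 * r 1) = r 0 + r 1 := by
    simp only [ω]
    field_simp
  have h1 : 1 ≤ 4 * d ^ 2 * ω * r 2 := by
    rw [← hωA]
    nlinarith
  calc r 0 * r 1 ≤ r 0 * r 1 * (4 * d ^ 2 * ω * r 2) := le_mul_of_one_le_right (by positivity) h1
    _ = d ^ 2 * (r 0 + r 1) * r 2 := by rw [← hω4]; ring

theorem mul_le_sq_mul_of_flower {d k : ℕ} {c : ℕ → ℂ} {r : ℕ → ℝ} {t : ℝ}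
    (hpos : ∀ j ≤ d, 0 < r j)
    (hdisjoint : ∀ i j, 1 ≤ i → i ≤ d → 1 ≤ j → j ≤ d → i ≠ j →
      Disjoint (ball (c i) (r i)) (ball (c j) (r j)))
    (htangent0 : ∀ j, 1 ≤ j → j ≤ d → dist (c 0) (c j) = r 0 + r j)
    (htangent : ∀ j, 1 ≤ j → j < d → dist (c j) (c (j + 1)) = r j + r (j + 1))
    (hk : 1 ≤ k) (hkd : k ≤ d) (ht : 0 ≤ t) (hit : dist (c 0 + t • (c 0 - c 1)) (c k) ≤ r k) :
    r 0 * r 1 ≤ d ^ 2 * (r 0 + r 1) * r 2 := by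
  have hd : 1 ≤ d := hk.trans hkd
  have hr₀ := hpos 0 d.zero_le
  have hr₁ := hpos 1 hd
  obtain ⟨μ, p, hμ, hμ₀, hμ₁⟩ :=
    exists_norm_eq_one_mul_sub_eq (add_pos hr₀ hr₁) (htangent0 1 le_rfl hd)
  have hiso : ∀ z w, dist (μ * (z - p)) (μ * (w - p)) = dist z w := fun z w => by
    rw [dist_eq_norm, ← mul_sub, norm_mul, hμ, one_mul, sub_sub_sub_cancel_right, dist_eq_norm]
  set ζ : ℕ → ℂ := fun j => μ * (c j - p)
  have hζ₀ : ∀ j, dist (ζ j) (r 0) = dist (c 0) (c j) := fun j => by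
    rw [← hμ₀, hiso, dist_comm]
  have hζ₁ : ∀ j, dist (ζ j) (-r 1) = dist (c 1) (c j) := fun j => by
    rw [← hμ₁, hiso, dist_comm]
  have hs : dist ((r 0 + t * (r 0 + r 1) : ℝ) : ℂ) (ζ k) ≤ r k := by
    have : μ * (c 0 + t • (c 0 - c 1) - p) = (r 0 + t * (r 0 + r 1) : ℝ) := by
      rw [real_smul]
      push_cast
      linear_combination (1 + (t : ℂ)) * hμ₀ - (t : ℂ) * hμ₁
    rwa [← this, hiso]
  have hk₂ : 2 ≤ k := by
    by_contra! hk₂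
    obtain rfl : k = 1 := by omega
    rw [show ζ 1 = (-r 1 : ℝ) by push_cast; exact hμ₁, isometry_ofReal.dist_eq, Real.dist_eq,
      abs_of_pos (by nlinarith)] at hs
    nlinarith
  refine mul_le_sq_mul_of_normalized_flower (ζ := ζ) hpos (fun j hj hjd => ?_)
    (fun j hj hjd => ?_) ?_ (fun j hj hjd => ?_) hk₂ hkd ?_
  · rw [hζ₀, htangent0 j (by omega) hjd]
  · rw [hζ₁, ← disjoint_ball_ball_iff hr₁ (hpos j hjd)]
    exact hdisjoint 1 j le_rfl hd (by omega) hjd (by omega)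
  · rw [hζ₁, htangent 1 le_rfl (by omega)]
  · rw [hiso, htangent j (by omega) hjd]
  · have := abs_im_le_abs_im_add_dist (ζ k) ((r 0 + t * (r 0 + r 1) : ℝ) : ℂ)
    rw [ofReal_im, abs_zero, zero_add, dist_comm] at this
    exact this.trans hs

theorem ring_lemma_three_circle_variant_general
    (d : ℕ) (c : ℕ → ℂ) (r : ℕ → ℝ)
    (hpos : ∀ j, j ≤ d → 0 < r j)
    (hdisjoint : ∀ i j, 1 ≤ i → i ≤ d → 1 ≤ j → j ≤ d → i ≠ j →
      Disjoint (ball (c i) (r i)) (ball (c j) (r j)))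
    (htangent0 : ∀ j, 1 ≤ j → j ≤ d → dist (c 0) (c j) = r 0 + r j)
    (htangent : ∀ j, 1 ≤ j → j < d → dist (c j) (c (j + 1)) = r j + r (j + 1))
    (hseparate : Bornology.IsBounded
      (connectedComponentIn (⋃ j ∈ Finset.Icc 1 d, closedBall (c j) (r j))ᶜ (c 0))) :
    r 2 ≥ 0.01 / (d : ℝ) ^ 2 * min (r 0) (r 1) := by
  have hd : 1 ≤ d := by
    by_contra! hd
    obtain rfl : d = 0 := by omega
    refine NormedSpace.unbounded_univ ℝ ℂ ?_
    simpa [connectedComponentIn_univ, PreconnectedSpace.connectedComponent_eq_univ] using hseparate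
  have hr₀ := hpos 0 d.zero_le
  have hr₁ := hpos 1 hd
  have hc : c 0 - c 1 ≠ 0 := by
    rw [sub_ne_zero, ← dist_pos, htangent0 1 le_rfl hd]
    positivity
  obtain ⟨t, ht, hmem⟩ := exists_nonneg_add_smul_mem_of_isBounded_connectedComponentIn hc hseparate
  simp only [Set.mem_iUnion, Finset.mem_Icc, mem_closedBall, exists_prop] at hmem
  obtain ⟨k, ⟨hk, hkd⟩, hit⟩ := hmem
  have key := mul_le_sq_mul_of_flower hpos hdisjoint htangent0 htangent hk hkd ht hit
  have hmin : min (r 0) (r 1) ≤ 2 * d ^ 2 * r 2 := by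
    have := min_le_left (r 0) (r 1)
    have := min_le_right (r 0) (r 1)
    nlinarith
  rw [ge_iff_le, div_mul_eq_mul_div, div_le_iff₀ (by positivity)]
  linarith [lt_min hr₀ hr₁]

/-- **Three-circle variant of the Ring Lemma.**
A flower `(D 0; D 1, …, D d)` with `d` petals: the petals `D j = closedBall (c j) (r j)`,
`1 ≤ j ≤ d`, have pairwise disjoint interiors, are all (externally) tangent to the central
disk `D 0`, are consecutively tangent in cyclic order, and their union separates `D 0`
from infinity (the connected component of the complement of the union of the petals
containing the center `c 0` is bounded). Then `r 2 ≥ 0.01 d⁻² min{r 0, r 1}`. -/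
theorem ring_lemma_three_circle_variant
    (d : ℕ) (c : ℕ → ℂ) (r : ℕ → ℝ)
    (hpos : ∀ j, j ≤ d → 0 < r j)
    (hdisjoint : ∀ i j, 1 ≤ i → i ≤ d → 1 ≤ j → j ≤ d → i ≠ j →
      Disjoint (ball (c i) (r i)) (ball (c j) (r j)))
    (htangent0 : ∀ j, 1 ≤ j → j ≤ d → dist (c 0) (c j) = r 0 + r j)
    (htangent : ∀ j, 1 ≤ j → j < d → dist (c j) (c (j + 1)) = r j + r (j + 1))
    (htangent_cyc : dist (c d) (c 1) = r d + r 1)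
    (hseparate : Bornology.IsBounded
      (connectedComponentIn (⋃ j ∈ Finset.Icc 1 d, closedBall (c j) (r j))ᶜ (c 0))) :
    r 2 ≥ 0.01 / (d : ℝ) ^ 2 * min (r 0) (r 1) :=
  ring_lemma_three_circle_variant_general d c r hpos hdisjoint htangent0 htangent hseparate
end

section
/- Let $f : \Delta \to \mathbb{R}^2$ be an affine map from the equilateral triangle $\Delta$ with vertices $(0,0)$, $(1,0)$, $(1/2, \sqrt{3}/2)$ to a triangle $\Delta'$ whose side lengths are $\ell_1, \ell_2, \ell_3$. Then $\int_\Delta |\nabla f(z)|^2 \, dz \leq 3(\ell_1^2 + \ell_2^2 + \ell_3^2)$. -/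
open MeasureTheory

/-! The sides of the equilateral triangle form a tight frame: for every linear map `L` on the
plane, `∑ ‖L vₖ‖² = (3/2) ∑ⱼ ‖L eⱼ‖²` over the three side vectors `vₖ`, so the sum of the squared
side lengths of the image triangle is `3/2` times the Frobenius energy density `|∇f|²`. Since the
triangle lies in the unit disc, its area is at most `π ≤ 9/2`, which gives the bound. -/

theorem AffineMap.dist_map_eq_norm_linear {V₁ V₂ P₁ P₂ : Type*}
    [SeminormedAddCommGroup V₁] [NormedSpace ℝ V₁] [PseudoMetricSpace P₁]
    [NormedAddTorsor V₁ P₁] [SeminormedAddCommGroup V₂] [NormedSpace ℝ V₂]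
    [PseudoMetricSpace P₂] [NormedAddTorsor V₂ P₂] (f : P₁ →ᵃ[ℝ] P₂) (x y : P₁) :
    dist (f x) (f y) = ‖f.linear (x -ᵥ y)‖ := by
  rw [dist_eq_norm_vsub V₂, f.linearMap_vsub]

theorem EuclideanSpace.sum_sum_sq_apply_eq_sum_norm_sq {ι κ : Type*} [Fintype ι] [Fintype κ]
    (v : ι → EuclideanSpace ℝ κ) : ∑ i : κ, ∑ j : ι, v j i ^ 2 = ∑ j : ι, ‖v j‖ ^ 2 := by
  simp only [Finset.sum_comm (γ := κ), EuclideanSpace.real_norm_sq_eq]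

section Plane

variable {F : Type*} [NormedAddCommGroup F] [InnerProductSpace ℝ F]

local notation "e₀" => (EuclideanSpace.single (0 : Fin 2) (1 : ℝ))
local notation "e₁" => (EuclideanSpace.single (1 : Fin 2) (1 : ℝ))

theorem norm_sq_map_fin_two (L : EuclideanSpace ℝ (Fin 2) →ₗ[ℝ] F)
    (x : EuclideanSpace ℝ (Fin 2)) :
    ‖L x‖ ^ 2 = x 0 ^ 2 * ‖L e₀‖ ^ 2 + 2 * (x 0 * x 1) * inner ℝ (L e₀) (L e₁)
      + x 1 ^ 2 * ‖L e₁‖ ^ 2 := by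
  have hx : x = x 0 • e₀ + x 1 • e₁ := by
    simpa [Fin.sum_univ_two, EuclideanSpace.basisFun_apply] using
      ((EuclideanSpace.basisFun (Fin 2) ℝ).sum_repr x).symm
  conv_lhs => rw [hx]
  rw [map_add, map_smul, map_smul, norm_add_sq_real, norm_smul, norm_smul, real_inner_smul_left,
    real_inner_smul_right, Real.norm_eq_abs, Real.norm_eq_abs, mul_pow, mul_pow, sq_abs, sq_abs]
  ring

theorem sum_norm_sq_map_sides_equilateral (L : EuclideanSpace ℝ (Fin 2) →ₗ[ℝ] F) :
    ‖L (!₂[0, 0] - !₂[1, 0])‖ ^ 2 + ‖L (!₂[1, 0] - !₂[1/2, √3 / 2])‖ ^ 2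
      + ‖L (!₂[0, 0] - !₂[1/2, √3 / 2])‖ ^ 2 = 3 / 2 * (‖L e₀‖ ^ 2 + ‖L e₁‖ ^ 2) := by
  have h3 : √3 ^ 2 = 3 := Real.sq_sqrt (by norm_num)
  rw [norm_sq_map_fin_two L (_ - _), norm_sq_map_fin_two L (_ - _), norm_sq_map_fin_two L (_ - _)]
  simp only [PiLp.sub_apply, Matrix.cons_val_zero, Matrix.cons_val_one, Matrix.cons_val_fin_one]
  linear_combination (‖L e₁‖ ^ 2 / 2) * h3

end Plane

theorem convexHull_equilateral_subset_closedBall :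
    convexHull ℝ {!₂[0, 0], !₂[1, 0], !₂[1/2, √3 / 2]} ⊆
      Metric.closedBall (0 : EuclideanSpace ℝ (Fin 2)) 1 := by
  refine convexHull_min ?_ (convex_closedBall _ _)
  have h3 : √3 ^ 2 = 3 := Real.sq_sqrt (by norm_num)
  norm_num [Set.insert_subset_iff, ← sq_le_one_iff₀ (norm_nonneg _),
    EuclideanSpace.real_norm_sq_eq, Fin.sum_univ_two, div_pow, h3]

theorem measureReal_convexHull_equilateral_le_pi :
    volume.real (convexHull ℝ {!₂[0, 0], !₂[1, 0], !₂[1/2, √3 / 2]} :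
      Set (EuclideanSpace ℝ (Fin 2))) ≤ Real.pi := by
  calc _ ≤ volume.real (Metric.closedBall (0 : EuclideanSpace ℝ (Fin 2)) 1) :=
        measureReal_mono convexHull_equilateral_subset_closedBall measure_closedBall_lt_top.ne
    _ = Real.pi := by simp [measureReal_def, Real.pi_nonneg]

/-- Dirichlet energy bound for an affine map from the unit equilateral triangle
(with vertices `(0,0)`, `(1,0)`, `(1/2, √3/2)`) to a triangle with side lengths
`ℓ₁, ℓ₂, ℓ₃`: the integral over the triangle of the squared Frobenius norm of the
(constant) Jacobian of `f` is at most `3(ℓ₁² + ℓ₂² + ℓ₃²)`. -/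
theorem dirichlet_energy_affine_triangle
    (f : EuclideanSpace ℝ (Fin 2) →ᵃ[ℝ] EuclideanSpace ℝ (Fin 2))
    (ℓ₁ ℓ₂ ℓ₃ : ℝ)
    (h₁ : ℓ₁ = dist (f (!₂[0, 0] : EuclideanSpace ℝ (Fin 2)))
                    (f (!₂[1, 0] : EuclideanSpace ℝ (Fin 2))))
    (h₂ : ℓ₂ = dist (f (!₂[1, 0] : EuclideanSpace ℝ (Fin 2)))
                    (f (!₂[1/2, Real.sqrt 3 / 2] : EuclideanSpace ℝ (Fin 2))))
    (h₃ : ℓ₃ = dist (f (!₂[0, 0] : EuclideanSpace ℝ (Fin 2)))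
                    (f (!₂[1/2, Real.sqrt 3 / 2] : EuclideanSpace ℝ (Fin 2)))) :
    ∫ _z in convexHull ℝ
        ({!₂[0, 0], !₂[1, 0], !₂[1/2, Real.sqrt 3 / 2]} : Set (EuclideanSpace ℝ (Fin 2))),
      (∑ i : Fin 2, ∑ j : Fin 2, (f.linear (EuclideanSpace.single j 1) i) ^ 2)
      ≤ 3 * (ℓ₁ ^ 2 + ℓ₂ ^ 2 + ℓ₃ ^ 2) := by
  set E := ∑ i : Fin 2, ∑ j : Fin 2, (f.linear (EuclideanSpace.single j 1) i) ^ 2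
  have hsides : ℓ₁ ^ 2 + ℓ₂ ^ 2 + ℓ₃ ^ 2 = 3 / 2 * E := by
    simp only [E, EuclideanSpace.sum_sum_sq_apply_eq_sum_norm_sq, Fin.sum_univ_two, h₁, h₂, h₃,
      f.dist_map_eq_norm_linear, vsub_eq_sub]
    exact sum_norm_sq_map_sides_equilateral f.linear
  have hE : 0 ≤ E := by positivity
  rw [setIntegral_const, smul_eq_mul, hsides]
  calc _ ≤ 4 * E := by
        gcongr
        exact measureReal_convexHull_equilateral_le_pi.trans Real.pi_le_four
    _ ≤ 3 * (3 / 2 * E) := by linarith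
end

section
/- Let $\theta_0 \in (0, 2\pi) \setminus \{\pi\}$, and let $\mathbf{A}$ be a real $2 \times 2$ matrix with $\det(\mathbf{A}) = 1$ of the form $\mathbf{A} = \mathbf{R}_{-\vartheta} \mathbf{D}^{1/2}$ where $\mathbf{D}$ is a diagonal matrix with positive entries and $\mathbf{R}_{-\vartheta}$ is a rotation. Suppose there exist angles $\vartheta_1, \vartheta_2$ such that $\mathbf{R}_{\theta_0} \mathbf{A} \mathbf{R}_{\vartheta_1} = \mathbf{A} \mathbf{R}_{\vartheta_2}$. Then $\mathbf{D}$ is the identity matrix, and hence $\mathbf{A}$ is a rotation matrix. -/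
open Matrix

/-- The rotation matrix by angle `θ`. -/
noncomputable def Rot (θ : ℝ) : Matrix (Fin 2) (Fin 2) ℝ :=
  !![Real.cos θ, -Real.sin θ; Real.sin θ, Real.cos θ]

lemma Rot_mul (a b : ℝ) : Rot a * Rot b = Rot (a + b) := by
  ext i j
  fin_cases i <;> fin_cases j <;>
    simp [Rot, Matrix.mul_apply, Fin.sum_univ_two, Real.cos_add, Real.sin_add] <;> ring

lemma Rot_zero : Rot 0 = 1 := by
  ext i j
  fin_cases i <;> fin_cases j <;> simp [Rot, Matrix.one_apply]

/-- If `A = R_{-ϑ} D^{1/2}` with `D` diagonal with positive entries, `det A = 1`, and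
`R_{θ₀} A R_{ϑ₁} = A R_{ϑ₂}` for some `θ₀ ∈ (0, 2π) \ {π}`, then `D` is the identity
matrix, and hence `A = R_{-ϑ}` is a rotation matrix. -/
theorem rotation_conjugation_forces_identity
    (θ₀ ϑ ϑ₁ ϑ₂ : ℝ) (d : Fin 2 → ℝ)
    (hθ₀ : θ₀ ∈ Set.Ioo 0 (2 * Real.pi)) (hθ₀' : θ₀ ≠ Real.pi)
    (hd : ∀ i, 0 < d i)
    (A : Matrix (Fin 2) (Fin 2) ℝ)
    (hA : A = Rot (-ϑ) * Matrix.diagonal fun i => Real.sqrt (d i))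
    (hdet : A.det = 1)
    (hconj : Rot θ₀ * A * Rot ϑ₁ = A * Rot ϑ₂) :
    Matrix.diagonal d = (1 : Matrix (Fin 2) (Fin 2) ℝ) ∧ A = Rot (-ϑ) := by
  obtain ⟨h0, h2⟩ := hθ₀
  have πpos := Real.pi_pos
  have hsin : Real.sin θ₀ ≠ 0 := by
    intro h
    obtain ⟨n, hn⟩ := Real.sin_eq_zero_iff.mp h
    have hn1 : (1 : ℤ) ≤ n := by
      by_contra hc
      push_neg at hc
      have hn0 : n ≤ 0 := by omega
      have : (n : ℝ) ≤ 0 := by exact_mod_cast hn0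
      nlinarith
    have hn2 : n ≤ 1 := by
      by_contra hc
      push_neg at hc
      have : (2 : ℝ) ≤ (n : ℝ) := by exact_mod_cast hc
      nlinarith
    have : n = 1 := le_antisymm hn2 hn1
    subst this
    simp at hn
    exact hθ₀' hn.symm
  set S : Matrix (Fin 2) (Fin 2) ℝ := Matrix.diagonal fun i => Real.sqrt (d i) with hS
  -- cancel the rotation R_{-ϑ}
  have key : Rot θ₀ * S = S * Rot (ϑ₂ - ϑ₁) := by
    have h1 : Rot (-ϑ) * (Rot θ₀ * S * Rot ϑ₁) = Rot (-ϑ) * (S * Rot ϑ₂) := by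
      have hc : Rot θ₀ * Rot (-ϑ) = Rot (-ϑ) * Rot θ₀ := by
        rw [Rot_mul, Rot_mul, add_comm]
      calc Rot (-ϑ) * (Rot θ₀ * S * Rot ϑ₁)
          = (Rot (-ϑ) * Rot θ₀) * S * Rot ϑ₁ := by noncomm_ring
        _ = (Rot θ₀ * Rot (-ϑ)) * S * Rot ϑ₁ := by rw [hc]
        _ = Rot θ₀ * (Rot (-ϑ) * S) * Rot ϑ₁ := by noncomm_ring
        _ = Rot (-ϑ) * S * Rot ϑ₂ := by rw [← hA]; exact hconj
        _ = Rot (-ϑ) * (S * Rot ϑ₂) := by noncomm_ring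
    have h2' : Rot θ₀ * S * Rot ϑ₁ = S * Rot ϑ₂ := by
      have := congrArg (fun M => Rot ϑ * M) h1
      simpa [← Matrix.mul_assoc, Rot_mul, Rot_zero] using this
    have := congrArg (fun M => M * Rot (-ϑ₁)) h2'
    simpa [Matrix.mul_assoc, Rot_mul, Rot_zero, sub_eq_add_neg] using this
  have e10 := congrFun (congrFun key 1) 0
  have e01 := congrFun (congrFun key 0) 1
  simp [hS, Rot, Matrix.mul_apply, Fin.sum_univ_two, Matrix.diagonal] at e10 e01
  -- e10 : sin θ₀ * √d₀ = √d₁ * sin δ ; e01 : -(sin θ₀ * √d₁)? check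
  have hs0 : 0 < Real.sqrt (d 0) := Real.sqrt_pos.mpr (hd 0)
  have hs1 : 0 < Real.sqrt (d 1) := Real.sqrt_pos.mpr (hd 1)
  have hdets : Real.sqrt (d 0) * Real.sqrt (d 1) = 1 := by
    rw [hA] at hdet
    rw [Matrix.det_mul, Matrix.det_diagonal, Fin.prod_univ_two] at hdet
    have : (Rot (-ϑ)).det = 1 := by
      simp [Rot, Matrix.det_fin_two_of]
      nlinarith [Real.sin_sq_add_cos_sq ϑ]
    rw [this, one_mul] at hdet
    exact hdet
  have h4 : Real.sin θ₀ * (Real.sqrt (d 0) * Real.sqrt (d 0) - Real.sqrt (d 1) * Real.sqrt (d 1)) = 0 := by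
    linear_combination Real.sqrt (d 0) * e10 - Real.sqrt (d 1) * e01
  have h3 : Real.sqrt (d 0) * Real.sqrt (d 0) = Real.sqrt (d 1) * Real.sqrt (d 1) := by
    have := (mul_eq_zero.mp h4).resolve_left hsin
    linarith
  have hd01 : d 0 = d 1 := by
    rw [← Real.mul_self_sqrt (hd 0).le, ← Real.mul_self_sqrt (hd 1).le]; exact h3
  have hd0 : d 0 = 1 := by
    rw [← hd01] at hdets
    rw [← Real.mul_self_sqrt (hd 0).le]; exact hdets
  have hd1 : d 1 = 1 := hd01 ▸ hd0
  have h1 : Real.sqrt (d 0) = 1 := by rw [hd0, Real.sqrt_one]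
  have h1' : Real.sqrt (d 1) = 1 := by rw [hd1, Real.sqrt_one]
  have hdfun : d = fun _ => 1 := by
    funext i; fin_cases i <;> assumption
  constructor
  · rw [hdfun]; exact Matrix.diagonal_one
  · have : S = 1 := by
      rw [hS]
      have : (fun i => Real.sqrt (d i)) = fun _ => (1:ℝ) := by
        funext i; fin_cases i <;> assumption
      rw [this]; exact Matrix.diagonal_one
    rw [hA, this, mul_one]
end
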